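/- Let J ⋐ J₁ ⋐ J₂ ⋐ J₃ ⋐ (0,∞) be open intervals, and let −1 < σ < σ₁ < σ̃₁ < σ₂ < σ₃ < 1. For R large let S_+ = S_{+,R^{1/4}} be a phase function, defined as in the Isozaki–Kitada construction, satisfying the eikonal equation Σ g^{ij}(x) ∂_{x_i}S_+ ∂_{x_j}S_+ = |ξ|² on Γ^+(R^{1/4},J₃,σ₃) together with the bounds |∂_x^α ∂_ξ^β(S_+(x,ξ) − x·ξ)| ≤ C_{αβ} min(⟨x⟩^{1−ρ−|α|}, R^{(1−ρ−|α|)/4}). Then there exist c > 0 and R₀ > 1 such that for every τ ≥ 0, every R ≥ R₀, and all x, y, ξ with (x,ξ) ∈ Γ^+(R^{1/3},J₂,σ₂) ∖ Γ^+(R^{5/12},J₁,σ̃₁) and (y,ξ) ∈ Γ^+(R^{1/2},J₁,σ₁), one has |∇_ξ(τ|ξ|² + S_+(y,ξ) − S_+(x,ξ))| ≥ c(1 + τ + |x| + |y|). -/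

import Mathlib

open MeasureTheory Filter Complex
open scoped ENNReal NNReal InnerProductSpace FourierTransform

noncomputable section

/-- `ℝ^d` as a Euclidean space. -/
abbrev Rd (d : ℕ) : Type := EuclideanSpace ℝ (Fin d)

/-- `i`-th partial derivative of a complex-valued function on `ℝ^d`. -/
def pderivC {d : ℕ} (i : Fin d) (f : Rd d → ℂ) (x : Rd d) : ℂ :=
  fderiv ℝ f x (EuclideanSpace.single i 1)

/-- `i`-th partial derivative of a real-valued function on `ℝ^d`. -/
def pderivR {d : ℕ} (i : Fin d) (f : Rd d → ℝ) (x : Rd d) : ℝ :=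
  fderiv ℝ f x (EuclideanSpace.single i 1)

/-- The Laplace–Beltrami operator `Δ_g u = (det g)^{-1/2} ∂_i ((det g)^{1/2} g^{ij} ∂_j u)`
of the Riemannian metric `g = (g_{ij})` on `ℝ^d`. -/
def LaplaceBeltrami {d : ℕ} (g : Rd d → Matrix (Fin d) (Fin d) ℝ) (u : Rd d → ℂ)
    (x : Rd d) : ℂ :=
  ((Real.sqrt (g x).det : ℝ) : ℂ)⁻¹ *
    ∑ i, pderivC i
      (fun y => ((Real.sqrt (g y).det : ℝ) : ℂ) * ∑ j, (((g y)⁻¹ i j : ℝ) : ℂ) * pderivC j u y) x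

/-- A smooth symmetric matrix-valued function on `ℝ^d` (a smooth metric). -/
def IsSmoothMetric {d : ℕ} (g : Rd d → Matrix (Fin d) (Fin d) ℝ) : Prop :=
  (∀ i j, ContDiff ℝ (⊤ : ℕ∞) fun x => g x i j) ∧ ∀ x, (g x).IsSymm

/-- Uniform two-sided quadratic form bounds `c‖ξ‖² ≤ ξᵀ m(x) ξ ≤ C‖ξ‖²`. -/
def UnifBounds {d : ℕ} (m : Rd d → Matrix (Fin d) (Fin d) ℝ) (c C : ℝ) : Prop :=
  ∀ (x ξ : Rd d),
    c * ‖ξ‖ ^ 2 ≤ ∑ i, ∑ j, m x i j * ξ i * ξ j ∧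
      ∑ i, ∑ j, m x i j * ξ i * ξ j ≤ C * ‖ξ‖ ^ 2

/-- Long-range condition: `|∂^α (g^{ij}(x) - δ_{ij})| ≤ C_α ⟨x⟩^{-ρ-|α|}`. -/
def LongRange {d : ℕ} (ρ : ℝ) (g : Rd d → Matrix (Fin d) (Fin d) ℝ) : Prop :=
  ∀ (i j : Fin d) (n : ℕ), ∃ C : ℝ, ∀ x : Rd d,
    ‖iteratedFDeriv ℝ n (fun y => (g y)⁻¹ i j - if i = j then (1 : ℝ) else 0) x‖
      ≤ C * (1 + ‖x‖ ^ 2) ^ (-(ρ + n) / 2)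

/-- All derivatives of the metric coefficients are bounded on `ℝ^d`. -/
def BoundedDerivs {d : ℕ} (g : Rd d → Matrix (Fin d) (Fin d) ℝ) : Prop :=
  ∀ (i j : Fin d) (n : ℕ), ∃ C : ℝ, ∀ x : Rd d,
    ‖iteratedFDeriv ℝ n (fun y => g y i j) x‖ ≤ C

/-- Christoffel symbols `Γ^k_{ij}` of the metric `g`. -/
def Christoffel {d : ℕ} (g : Rd d → Matrix (Fin d) (Fin d) ℝ) (x : Rd d)
    (k i j : Fin d) : ℝ :=
  (1 / 2) * ∑ l, (g x)⁻¹ k l *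
    (pderivR i (fun y => g y j l) x + pderivR j (fun y => g y i l) x
      - pderivR l (fun y => g y i j) x)

/-- `γ` is a geodesic of the metric `g`. -/
def IsGeodesic {d : ℕ} (g : Rd d → Matrix (Fin d) (Fin d) ℝ) (γ : ℝ → Rd d) : Prop :=
  ContDiff ℝ 2 γ ∧ ∀ (t : ℝ) (k : Fin d),
    deriv (deriv fun s => γ s k) t
      + ∑ i, ∑ j, Christoffel g (γ t) k i j * deriv (fun s => γ s i) t
          * deriv (fun s => γ s j) t = 0

/-- The metric `g` is non-trapping: every (nonconstant) geodesic leaves every compact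
subset of `ℝ^d` in finite time. -/
def NonTrapping {d : ℕ} (g : Rd d → Matrix (Fin d) (Fin d) ℝ) : Prop :=
  ∀ γ : ℝ → Rd d, IsGeodesic g γ → deriv γ 0 ≠ 0 →
    ∀ K : Set (Rd d), IsCompact K → ∃ T : ℝ, ∀ t : ℝ, T ≤ |t| → γ t ∉ K

/-- A Strichartz-admissible pair in dimension `d`: `2/p + d/q = d/2`, `p ≥ 2`,
`(p,q) ≠ (2,∞)`. -/
def Admissible (d : ℕ) (p q : ℝ≥0∞) : Prop :=
  2 / p + d / q = d / 2 ∧ 2 ≤ p ∧ (p, q) ≠ (2, ⊤)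

/-- Mixed space-time norm `‖u‖_{L^p(s; L^q(μ))}`. -/
def mixedNorm {d : ℕ} (p q : ℝ≥0∞) (s : Set ℝ) (μ : Measure (Rd d))
    (u : ℝ → Rd d → ℂ) : ℝ≥0∞ :=
  eLpNorm (fun t => (eLpNorm (u t) q μ).toReal) p (volume.restrict s)

/-- The Sobolev `H^s` norm of a Schwartz function, via the Fourier transform. -/
def schwartzHsNorm {d : ℕ} (s : ℝ) (f : SchwartzMap (Rd d) ℂ) : ℝ≥0∞ :=
  eLpNorm (fun ξ : Rd d => ((1 + ‖ξ‖ ^ 2) ^ (s / 2) : ℝ) • 𝓕 (⇑f) ξ) 2 volume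

/-- The Sobolev `H^s` norm (`s ≥ 0`) of a general function, obtained from the Fourier
description on Schwartz functions by approximation in `L²`; it is infinite if the
function is not in `H^s`. -/
def hsNorm {d : ℕ} (s : ℝ) (f : Rd d → ℂ) : ℝ≥0∞ :=
  ⨅ φ : {φ : ℕ → SchwartzMap (Rd d) ℂ //
      Tendsto (fun n => eLpNorm (f - ⇑(φ n)) 2 volume) atTop (nhds 0)},
    liminf (fun n => schwartzHsNorm s (φ.1 n)) atTop

/-- Abstract spectral data for the nonnegative self-adjoint realization `P` of `-Δ_g`
on `L²(ℝ^d)`: `res z` is the resolvent `(P - z)⁻¹`, `fc φ` the operator `φ(P)` given by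
the Borel functional calculus (only the values of `φ` on the spectrum, contained in
`[0,∞)`, matter), and `U t` the Schrödinger group `e^{-itP}`.  The fields record the
standard properties characterizing these objects. -/
structure SchrodingerOps (d : ℕ) (g : Rd d → Matrix (Fin d) (Fin d) ℝ) where
  res : ℂ → (Rd d → ℂ) → Rd d → ℂ
  fc : (ℝ → ℂ) → (Rd d → ℂ) → Rd d → ℂ
  U : ℝ → (Rd d → ℂ) → Rd d → ℂ
  res_spec : ∀ z : ℂ, z.im ≠ 0 → ∀ f : SchwartzMap (Rd d) ℂ,
    ContDiff ℝ (⊤ : ℕ∞) (res z ⇑f) ∧ MemLp (res z ⇑f) 2 volume ∧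
      ∀ x, -(LaplaceBeltrami g (res z ⇑f) x) - z * res z ⇑f x = f x
  res_add : ∀ z u v, MemLp u 2 volume → MemLp v 2 volume →
    res z (u + v) =ᵐ[volume] res z u + res z v
  res_smul : ∀ (z : ℂ) (a : ℂ) u, MemLp u 2 volume →
    res z (a • u) =ᵐ[volume] a • res z u
  res_bound : ∀ z : ℂ, z.im ≠ 0 → ∀ u, MemLp u 2 volume →
    eLpNorm (res z u) 2 volume ≤ ENNReal.ofReal |z.im|⁻¹ * eLpNorm u 2 volume
  fc_res : ∀ z : ℂ, z.im ≠ 0 → ∀ u, MemLp u 2 volume →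
    fc (fun l => ((l : ℂ) - z)⁻¹) u =ᵐ[volume] res z u
  fc_add : ∀ (φ ψ : ℝ → ℂ) u, MemLp u 2 volume →
    fc (φ + ψ) u =ᵐ[volume] fc φ u + fc ψ u
  fc_mul : ∀ (φ ψ : ℝ → ℂ) u, MemLp u 2 volume →
    fc (fun l => φ l * ψ l) u =ᵐ[volume] fc φ (fc ψ u)
  fc_addu : ∀ (φ : ℝ → ℂ) u v, MemLp u 2 volume → MemLp v 2 volume →
    fc φ (u + v) =ᵐ[volume] fc φ u + fc φ v
  fc_smulu : ∀ (φ : ℝ → ℂ) (a : ℂ) u, MemLp u 2 volume →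
    fc φ (a • u) =ᵐ[volume] a • fc φ u
  fc_bound : ∀ (φ : ℝ → ℂ) (M : ℝ), (∀ l : ℝ, 0 ≤ l → ‖φ l‖ ≤ M) →
    ∀ u, MemLp u 2 volume →
      eLpNorm (fc φ u) 2 volume ≤ ENNReal.ofReal M * eLpNorm u 2 volume
  U_group : ∀ t s u, MemLp u 2 volume → U (t + s) u =ᵐ[volume] U t (U s u)
  U_zero : ∀ u, MemLp u 2 volume → U 0 u =ᵐ[volume] u
  U_isometry : ∀ t u, MemLp u 2 volume →
    eLpNorm (U t u) 2 volume = eLpNorm u 2 volume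
  U_addu : ∀ t u v, MemLp u 2 volume → MemLp v 2 volume →
    U t (u + v) =ᵐ[volume] U t u + U t v
  U_smulu : ∀ (t : ℝ) (a : ℂ) u, MemLp u 2 volume → U t (a • u) =ᵐ[volume] a • U t u
  U_eq : ∀ f : SchwartzMap (Rd d) ℂ, ∀ (t : ℝ) (x : Rd d),
    Complex.I * deriv (fun s => U s ⇑f x) t + LaplaceBeltrami g (U t ⇑f) x = 0

/-- The semiclassical quantization
`a(x,hD)u(x) = (2πh)^{-d} ∬ e^{i(x-y)·ξ/h} a(x,ξ) u(y) dy dξ`. -/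
def sclOp {d : ℕ} (h : ℝ) (a : Rd d → Rd d → ℂ) (u : Rd d → ℂ) (x : Rd d) : ℂ :=
  (((2 * Real.pi * h) ^ d : ℝ))⁻¹ •
    ∫ ξ : Rd d, ∫ y : Rd d,
      Complex.exp (Complex.I * ((⟪x - y, ξ⟫_ℝ : ℝ) : ℂ) / (h : ℂ)) * (a x ξ * u y)

/-- The principal symbol `p₀(x,ξ) = Σ g^{ij}(x) ξ_i ξ_j` of `-Δ_g`. -/
def principalSymbol {d : ℕ} (g : Rd d → Matrix (Fin d) (Fin d) ℝ) (x ξ : Rd d) : ℝ :=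
  ∑ i, ∑ j, (g x)⁻¹ i j * ξ i * ξ j

/-- The outgoing (`ε = 1`) and incoming (`ε = -1`) zones
`Γ^±(R,J,σ) = {(x,ξ) : |x| > R, |ξ|² ∈ J, ±⟨x,ξ⟩/(|x||ξ|) > -σ}`. -/
def zone (d : ℕ) (ε R : ℝ) (J : Set ℝ) (σ : ℝ) : Set (Rd d × Rd d) :=
  {p | R < ‖p.1‖ ∧ ‖p.2‖ ^ 2 ∈ J ∧ -σ < ε * (⟪p.1, p.2⟫_ℝ / (‖p.1‖ * ‖p.2‖))}

end
private lemma helper_decay {ρ v w : ℝ} (hρ : 0 < ρ) (hv : 0 ≤ v) (hw : 0 < w)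
    (hwv : w ≤ v ^ 2) :
    (1 + v ^ 2) ^ ((1 - ρ) / 2) ≤ (1 + v) * w ^ (-(ρ / 2)) := by
  have h1 : (0:ℝ) < 1 + v ^ 2 := by positivity
  have e : (1 + v ^ 2) ^ ((1 - ρ) / 2)
      = (1 + v ^ 2) ^ ((1:ℝ)/2) * (1 + v ^ 2) ^ (-(ρ/2)) := by
    rw [← Real.rpow_add h1]; ring_nf
  rw [e]
  have h2 : (1 + v ^ 2) ^ ((1:ℝ)/2) ≤ 1 + v := by
    rw [← Real.sqrt_eq_rpow]
    calc Real.sqrt (1 + v ^ 2) ≤ Real.sqrt ((1 + v) ^ 2) :=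
          Real.sqrt_le_sqrt (by nlinarith)
      _ = 1 + v := Real.sqrt_sq (by positivity)
  have h3 : (1 + v ^ 2) ^ (-(ρ/2)) ≤ w ^ (-(ρ/2)) :=
    Real.rpow_le_rpow_of_nonpos hw (by nlinarith) (by linarith)
  have h4 : (0:ℝ) ≤ (1 + v ^ 2) ^ (-(ρ/2)) := Real.rpow_nonneg (by positivity) _
  calc (1 + v ^ 2) ^ ((1:ℝ)/2) * (1 + v ^ 2) ^ (-(ρ/2))
      ≤ (1 + v) * (1 + v ^ 2) ^ (-(ρ/2)) := mul_le_mul_of_nonneg_right h2 h4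
    _ ≤ (1 + v) * w ^ (-(ρ/2)) := mul_le_mul_of_nonneg_left h3 (by positivity)

private lemma case2_comb {N K τ nξ a b s t c₂ m μ : ℝ}
    (h1 : 2*τ*nξ + s*a - t*b - K ≤ N)
    (h2 : 2*τ*s*nξ + a - b - K ≤ N)
    (h3 : -2*τ*t*nξ + b - a - K ≤ N)
    (hτ : 0 ≤ τ) (hnξ : 0 ≤ nξ) (hmξ : m ≤ nξ) (hm1 : m ≤ 1) (hm0 : 0 ≤ m)
    (hμ0 : 0 ≤ μ) (hμ1 : μ ≤ (s-t)/4) (hc₂ : c₂ = m*μ)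
    (ht : -1 < t) (hts : t < s) (hs1 : s < 1) (ha : 0 ≤ a) (hb : 0 ≤ b) :
    c₂*(τ+a+b) - K ≤ N := by
  have hlam2 : (0:ℝ) ≤ 1/4 - (s+t)/8 := by linarith
  have hlam3 : (0:ℝ) ≤ 1/4 + (s+t)/8 := by linarith
  have e2 := mul_le_mul_of_nonneg_left h2 hlam2
  have e3 := mul_le_mul_of_nonneg_left h3 hlam3
  have hprod : 0 ≤ τ*nξ*(4-(s+t)^2) := by
    have h4 : (0:ℝ) < 2 - (s+t) := by linarith
    have h5 : (0:ℝ) < 2 + (s+t) := by linarith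
    have := mul_pos h4 h5
    nlinarith [mul_nonneg hτ hnξ]
  have step1 : (s-t)/4*(2*τ*nξ+a+b) - K ≤ N := by nlinarith [e2, e3, h1, hprod]
  have hq1 : c₂*τ ≤ (s-t)/4*(2*τ*nξ) := by
    have hA : m*(μ*τ) ≤ nξ*(μ*τ) :=
      mul_le_mul_of_nonneg_right hmξ (mul_nonneg hμ0 hτ)
    have hB : μ*(τ*nξ) ≤ (s-t)/4*(τ*nξ) :=
      mul_le_mul_of_nonneg_right hμ1 (mul_nonneg hτ hnξ)
    have hC : 0 ≤ (s-t)*(τ*nξ) :=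
      mul_nonneg (by linarith) (mul_nonneg hτ hnξ)
    nlinarith [hA, hB, hC]
  have hq2 : c₂*(a+b) ≤ (s-t)/4*(a+b) := by
    have hcc : c₂ ≤ (s-t)/4 := by
      calc c₂ = m*μ := hc₂
        _ ≤ 1*μ := mul_le_mul_of_nonneg_right hm1 hμ0
        _ = μ := one_mul μ
        _ ≤ (s-t)/4 := hμ1
    exact mul_le_mul_of_nonneg_right hcc (by linarith)
  calc c₂*(τ+a+b) - K = c₂*τ + c₂*(a+b) - K := by ring
    _ ≤ (s-t)/4*(2*τ*nξ) + (s-t)/4*(a+b) - K := by linarith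
    _ = (s-t)/4*(2*τ*nξ+a+b) - K := by ring
    _ ≤ N := step1

private lemma case1_comb {N K τ nξ a b t c₂ m μ : ℝ}
    (h1 : 2*τ*nξ - t*b - a - K ≤ N)
    (h3 : -2*τ*t*nξ + b - a - K ≤ N)
    (hsmall : a ≤ b*((1-t)/16))
    (hτ : 0 ≤ τ) (hnξ : 0 ≤ nξ) (hmξ : m ≤ nξ) (hm1 : m ≤ 1) (hm0 : 0 ≤ m)
    (hμ0 : 0 ≤ μ) (hμ2 : μ ≤ (1-t)/16) (hc₂ : c₂ = m*μ)
    (ht : -1 < t) (ht1 : t < 1) (ha : 0 ≤ a) (hb : 0 ≤ b) :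
    c₂*(τ+a+b) - K ≤ N := by
  have e : τ*nξ*(1-t) + (1-t)*b/2 - a - K ≤ N := by nlinarith [h1, h3]
  have hq1 : c₂*τ ≤ (1-t)*(τ*nξ) := by
    have hA : m*(μ*τ) ≤ nξ*(μ*τ) :=
      mul_le_mul_of_nonneg_right hmξ (mul_nonneg hμ0 hτ)
    have hB : μ*(τ*nξ) ≤ (1-t)/16*(τ*nξ) :=
      mul_le_mul_of_nonneg_right hμ2 (mul_nonneg hτ hnξ)
    have hC : 0 ≤ (1-t)*(τ*nξ) :=
      mul_nonneg (by linarith) (mul_nonneg hτ hnξ)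
    nlinarith [hA, hB, hC]
  have hq2 : c₂*(a+b) + a ≤ (1-t)*b/2 := by
    have hcc : c₂ ≤ (1-t)/16 := by
      calc c₂ = m*μ := hc₂
        _ ≤ 1*μ := mul_le_mul_of_nonneg_right hm1 hμ0
        _ = μ := one_mul μ
        _ ≤ (1-t)/16 := hμ2
    have hA : c₂*(a+b) ≤ (1-t)/16*(a+b) :=
      mul_le_mul_of_nonneg_right hcc (by linarith)
    have hintE : 0 ≤ (1-t)*(1+t)*b :=
      mul_nonneg (mul_nonneg (by linarith) (by linarith)) hb
    have hint1 : (1-t)*a ≤ (1-t)*(b*((1-t)/16)) :=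
      mul_le_mul_of_nonneg_left hsmall (by linarith)
    nlinarith [hA, hint1, hintE, hsmall, hb, ha]
  nlinarith [e, hq1, hq2]

private lemma K_comb {C' Rρ c₂ τ a b : ℝ} (hC : 0 ≤ C') (hR : 0 ≤ Rρ)
    (hcond : (3*C'+3)*Rρ ≤ c₂/2) (ha : 1 ≤ a) (hb : 0 ≤ b) (hτ : 0 ≤ τ) :
    C'*(1+a)*Rρ + C'*(1+b)*Rρ ≤ c₂/2*(τ+a+b) := by
  have hs : 2 + a + b ≤ 3*(τ+a+b) := by linarith
  have h2 : C'*(2+a+b) ≤ (3*C'+3)*(τ+a+b) := by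
    have := mul_le_mul_of_nonneg_left hs hC
    nlinarith [hτ, ha, hb]
  calc C'*(1+a)*Rρ + C'*(1+b)*Rρ = C'*(2+a+b)*Rρ := by ring
    _ ≤ (3*C'+3)*(τ+a+b)*Rρ := mul_le_mul_of_nonneg_right h2 hR
    _ = (3*C'+3)*Rρ*(τ+a+b) := by ring
    _ ≤ c₂/2*(τ+a+b) := mul_le_mul_of_nonneg_right hcond (by linarith)

private lemma final_comb {N K τ a b c₂ : ℝ} (hfin : c₂*(τ+a+b) - K ≤ N)
    (hK : K ≤ c₂/2*(τ+a+b)) (hc₂ : 0 < c₂) (ha : 1 ≤ a) (hb : 0 ≤ b)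
    (hτ : 0 ≤ τ) : c₂/4*(1+τ+a+b) ≤ N := by
  nlinarith [hfin, hK, hc₂, ha, hb, hτ]

set_option maxHeartbeats 1600000 in
/-- **Non-stationary phase lower bound in outgoing zones** (Lemma "ddds").  Let
`J = (aJ,bJ) ⋐ J₁ ⋐ J₂ ⋐ J₃ ⋐ (0,∞)` be nested open intervals and
`-1 < σ < σ₁ < σ̃₁ < σ₂ < σ₃ < 1`.  Let `S R = S_{+,R^{1/4}}` be Isozaki–Kitada phase
functions solving the eikonal equation on `Γ⁺(R^{1/4}, J₃, σ₃)` with the bounds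
`|∂_x^α ∂_ξ^β (S_+(x,ξ) - x·ξ)| ≤ C_{αβ} min(⟨x⟩^{1-ρ-|α|}, R^{(1-ρ-|α|)/4})`.  Then
there are `c > 0` and `R₀ > 1` such that for every `τ ≥ 0`, every `R ≥ R₀` and all
`x, y, ξ` with `(x,ξ) ∈ Γ⁺(R^{1/3},J₂,σ₂) ∖ Γ⁺(R^{5/12},J₁,σ̃₁)` and
`(y,ξ) ∈ Γ⁺(R^{1/2},J₁,σ₁)`, one has
`|∇_ξ(τ|ξ|² + S_+(y,ξ) - S_+(x,ξ))| ≥ c (1 + τ + |x| + |y|)`. -/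
theorem nonstationary_phase_lower_bound
    (d : ℕ) (g : Rd d → Matrix (Fin d) (Fin d) ℝ) (ρ : ℝ) (hρ : 0 < ρ)
    (hg : IsSmoothMetric g) (hlr : LongRange ρ g)
    (hell : ∃ c C : ℝ, 0 < c ∧ UnifBounds g c C)
    (aJ bJ a1 b1 a2 b2 a3 b3 : ℝ)
    (hJ : aJ < bJ) (ha3 : 0 < a3)
    (ha1 : a1 < aJ) (hb1 : bJ < b1) (ha2 : a2 < a1) (hb2 : b1 < b2)
    (ha3' : a3 < a2) (hb3 : b2 < b3)
    (σ σ₁ σt₁ σ₂ σ₃ : ℝ)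
    (hσ : -1 < σ) (hσ₁ : σ < σ₁) (hσt₁ : σ₁ < σt₁) (hσ₂ : σt₁ < σ₂)
    (hσ₃ : σ₂ < σ₃) (hσ₃' : σ₃ < 1)
    (S : ℝ → Rd d → Rd d → ℝ) (R₁ : ℝ)
    (hSsmooth : ∀ R : ℝ, R₁ ≤ R →
      ContDiff ℝ (⊤ : ℕ∞) (fun p : Rd d × Rd d => S R p.1 p.2))
    (hSeik : ∀ R : ℝ, R₁ ≤ R → ∀ x ξ : Rd d,
      (x, ξ) ∈ zone d 1 (R ^ ((1 : ℝ) / 4)) (Set.Ioo a3 b3) σ₃ →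
      ∑ i, ∑ j, (g x)⁻¹ i j * pderivR i (fun y => S R y ξ) x
          * pderivR j (fun y => S R y ξ) x = ‖ξ‖ ^ 2)
    (hSbounds : ∀ n₁ n₂ : ℕ, ∃ C : ℝ, ∀ R : ℝ, R₁ ≤ R → ∀ x ξ : Rd d,
      ‖iteratedFDeriv ℝ n₁
          (fun x' => iteratedFDeriv ℝ n₂ (fun ξ' => S R x' ξ' - ⟪x', ξ'⟫_ℝ) ξ) x‖
        ≤ C * min ((1 + ‖x‖ ^ 2) ^ ((1 - ρ - (n₁ : ℝ)) / 2))
            (R ^ ((1 - ρ - (n₁ : ℝ)) / 4))) :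
    ∃ c : ℝ, 0 < c ∧ ∃ R₀ : ℝ, 1 < R₀ ∧
      ∀ τ : ℝ, 0 ≤ τ → ∀ R : ℝ, R₀ ≤ R → R₁ ≤ R → ∀ x y ξ : Rd d,
        (x, ξ) ∈ zone d 1 (R ^ ((1 : ℝ) / 3)) (Set.Ioo a2 b2) σ₂ →
        (x, ξ) ∉ zone d 1 (R ^ ((5 : ℝ) / 12)) (Set.Ioo a1 b1) σt₁ →
        (y, ξ) ∈ zone d 1 (R ^ ((1 : ℝ) / 2)) (Set.Ioo a1 b1) σ₁ →
        c * (1 + τ + ‖x‖ + ‖y‖)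
          ≤ ‖fderiv ℝ (fun η : Rd d => τ * ‖η‖ ^ 2 + S R y η - S R x η) ξ‖ := by
  obtain ⟨C0, hC0⟩ := hSbounds 0 1
  clear hSeik hg hlr hell hJ hSbounds ha1 hb1
  set C' : ℝ := max C0 0 with hC'def
  have hC'0 : 0 ≤ C' := le_max_right _ _
  have ha1pos : 0 < a1 := by linarith
  set m : ℝ := min (Real.sqrt a1) 1 with hmdef
  have hm0 : 0 < m := lt_min (Real.sqrt_pos.mpr ha1pos) one_pos
  have hm1 : m ≤ 1 := min_le_right _ _
  set μ : ℝ := min ((σt₁ - σ₁) / 4) ((1 - σ₁) / 16) with hμdef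
  have hμ0 : 0 < μ := lt_min (by linarith) (by linarith)
  have hμ1 : μ ≤ (σt₁ - σ₁) / 4 := min_le_left _ _
  have hμ2 : μ ≤ (1 - σ₁) / 16 := min_le_right _ _
  set c₂ : ℝ := m * μ with hc₂def
  have hc₂ : 0 < c₂ := mul_pos hm0 hμ0
  refine ⟨c₂ / 4, by positivity, ?_⟩
  have hev1 : ∀ᶠ r : ℝ in atTop, (3 * C' + 3) * r ^ (-(ρ / 3)) < c₂ / 2 := by
    have h := (tendsto_rpow_neg_atTop (by positivity : 0 < ρ / 3)).const_mul (3 * C' + 3)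
    rw [mul_zero] at h
    exact h.eventually_lt_const (by positivity)
  have hev2 : ∀ᶠ r : ℝ in atTop, r ^ (-((1:ℝ) / 12)) < (1 - σ₁) / 16 :=
    (tendsto_rpow_neg_atTop (by norm_num)).eventually_lt_const (by linarith)
  obtain ⟨R₀', hR₀'⟩ := eventually_atTop.1 (hev1.and hev2)
  refine ⟨max R₀' 2, lt_of_lt_of_le one_lt_two (le_max_right _ _), ?_⟩
  intro τ hτ R hRR₀ hRR₁ x y ξ hxz hxnz hyz
  have hR2 : (2:ℝ) ≤ R := le_trans (le_max_right _ _) hRR₀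
  have hR1 : (1:ℝ) ≤ R := by linarith
  have hRpos : (0:ℝ) < R := by linarith
  obtain ⟨hcond1, hcond2⟩ := hR₀' R (le_trans (le_max_left _ _) hRR₀)
  simp only [zone, Set.mem_setOf_eq, one_mul, Set.mem_Ioo] at hxz hyz
  obtain ⟨hxa, hxJ, hxcos⟩ := hxz
  obtain ⟨hyb, hyJ, hycos⟩ := hyz
  have hapos : 0 < ‖x‖ := lt_of_le_of_lt (Real.rpow_nonneg hRpos.le _) hxa
  have hbpos : 0 < ‖y‖ := lt_of_le_of_lt (Real.rpow_nonneg hRpos.le _) hyb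
  have hξ2 : a1 < ‖ξ‖ ^ 2 := hyJ.1
  have hnξpos : 0 < ‖ξ‖ := by
    rcases eq_or_lt_of_le (norm_nonneg ξ) with h | h
    · rw [← h] at hξ2; norm_num at hξ2; linarith
    · exact h
  have hmξ : m ≤ ‖ξ‖ := by
    refine le_trans (min_le_left _ _) ?_
    have h := Real.sqrt_le_sqrt hξ2.le
    rwa [Real.sqrt_sq (norm_nonneg _)] at h
  have hxg1 : 1 ≤ ‖x‖ := le_trans (Real.one_le_rpow hR1 (by norm_num)) hxa.le
  have hyg1 : 1 ≤ ‖y‖ := le_trans (Real.one_le_rpow hR1 (by norm_num)) hyb.le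
  have hRρ0 : (0:ℝ) ≤ R ^ (-(ρ / 3)) := Real.rpow_nonneg hRpos.le _
  -- error bounds
  have hIbound : ∀ z : Rd d, ‖iteratedFDeriv ℝ 1 (fun ξ' => S R z ξ' - ⟪z, ξ'⟫_ℝ) ξ‖
      ≤ C' * ((1 + ‖z‖ ^ 2) ^ ((1 - ρ) / 2)) := by
    intro z
    have h0 := hC0 R hRR₁ z ξ
    rw [norm_iteratedFDeriv_zero] at h0
    have he : (1 - ρ - ((0:ℕ) : ℝ)) / 2 = (1 - ρ) / 2 := by norm_num
    have he' : (1 - ρ - ((0:ℕ) : ℝ)) / 4 = (1 - ρ) / 4 := by norm_num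
    rw [he, he'] at h0
    have hmn : (0:ℝ) ≤ min ((1 + ‖z‖ ^ 2) ^ ((1 - ρ) / 2)) (R ^ ((1 - ρ) / 4)) :=
      le_min (Real.rpow_nonneg (by positivity) _) (Real.rpow_nonneg hRpos.le _)
    calc ‖iteratedFDeriv ℝ 1 (fun ξ' => S R z ξ' - ⟪z, ξ'⟫_ℝ) ξ‖
        ≤ C0 * min ((1 + ‖z‖ ^ 2) ^ ((1 - ρ) / 2)) (R ^ ((1 - ρ) / 4)) := h0
      _ ≤ C' * min ((1 + ‖z‖ ^ 2) ^ ((1 - ρ) / 2)) (R ^ ((1 - ρ) / 4)) :=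
          mul_le_mul_of_nonneg_right (le_max_left _ _) hmn
      _ ≤ C' * ((1 + ‖z‖ ^ 2) ^ ((1 - ρ) / 2)) :=
          mul_le_mul_of_nonneg_left (min_le_left _ _) hC'0
  have hIx : ‖iteratedFDeriv ℝ 1 (fun ξ' => S R x ξ' - ⟪x, ξ'⟫_ℝ) ξ‖
      ≤ C' * (1 + ‖x‖) * R ^ (-(ρ / 3)) := by
    have hw : R ^ ((2:ℝ)/3) ≤ ‖x‖ ^ 2 := by
      have h3 : R ^ ((1:ℝ)/3) * R ^ ((1:ℝ)/3) = R ^ ((2:ℝ)/3) := by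
        rw [← Real.rpow_add hRpos]; norm_num
      rw [← h3, sq]
      exact mul_le_mul hxa.le hxa.le (Real.rpow_nonneg hRpos.le _) (norm_nonneg x)
    have hd := helper_decay hρ (norm_nonneg x) (Real.rpow_pos_of_pos hRpos _) hw
    have he : (R ^ ((2:ℝ)/3)) ^ (-(ρ/2)) = R ^ (-(ρ/3)) := by
      rw [← Real.rpow_mul hRpos.le]; norm_num
    rw [he] at hd
    calc ‖iteratedFDeriv ℝ 1 (fun ξ' => S R x ξ' - ⟪x, ξ'⟫_ℝ) ξ‖
        ≤ C' * ((1 + ‖x‖ ^ 2) ^ ((1 - ρ) / 2)) := hIbound x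
      _ ≤ C' * ((1 + ‖x‖) * R ^ (-(ρ/3))) := mul_le_mul_of_nonneg_left hd hC'0
      _ = C' * (1 + ‖x‖) * R ^ (-(ρ/3)) := by ring
  have hIy : ‖iteratedFDeriv ℝ 1 (fun ξ' => S R y ξ' - ⟪y, ξ'⟫_ℝ) ξ‖
      ≤ C' * (1 + ‖y‖) * R ^ (-(ρ / 3)) := by
    have hw : R ≤ ‖y‖ ^ 2 := by
      have h3 : R ^ ((1:ℝ)/2) * R ^ ((1:ℝ)/2) = R := by
        rw [← Real.rpow_add hRpos]; norm_num
      rw [← h3, sq]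
      exact mul_le_mul hyb.le hyb.le (Real.rpow_nonneg hRpos.le _) (norm_nonneg y)
    have hd := helper_decay hρ (norm_nonneg y) hRpos hw
    have he : R ^ (-(ρ/2)) ≤ R ^ (-(ρ/3)) :=
      Real.rpow_le_rpow_of_exponent_le hR1 (by linarith)
    calc ‖iteratedFDeriv ℝ 1 (fun ξ' => S R y ξ' - ⟪y, ξ'⟫_ℝ) ξ‖
        ≤ C' * ((1 + ‖y‖ ^ 2) ^ ((1 - ρ) / 2)) := hIbound y
      _ ≤ C' * ((1 + ‖y‖) * R ^ (-(ρ/2))) := mul_le_mul_of_nonneg_left hd hC'0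
      _ ≤ C' * ((1 + ‖y‖) * R ^ (-(ρ/3))) := by
          apply mul_le_mul_of_nonneg_left _ hC'0
          exact mul_le_mul_of_nonneg_left he (by positivity)
      _ = C' * (1 + ‖y‖) * R ^ (-(ρ/3)) := by ring

  -- inner product facts from the zones
  have hyξ : -σ₁ * (‖y‖ * ‖ξ‖) ≤ ⟪y, ξ⟫_ℝ := by
    have h := (lt_div_iff₀ (by positivity : (0:ℝ) < ‖y‖ * ‖ξ‖)).1 hycos
    linarith
  have hCSxξ : ⟪x, ξ⟫_ℝ ≤ ‖x‖ * ‖ξ‖ := real_inner_le_norm x ξ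
  have hCSxy : ⟪x, y⟫_ℝ ≤ ‖x‖ * ‖y‖ := real_inner_le_norm x y
  -- derivative setup
  have hSd : ∀ z : Rd d, DifferentiableAt ℝ (fun η => S R z η) ξ := by
    intro z
    have h := (hSsmooth R hRR₁).comp ((contDiff_const (c := z)).prodMk contDiff_id)
    exact (h.differentiable (by simp)).differentiableAt
  set Lx : Rd d →L[ℝ] ℝ := fderiv ℝ (fun η => S R x η) ξ with hLxdef
  set Ly : Rd d →L[ℝ] ℝ := fderiv ℝ (fun η => S R y η) ξ with hLydef
  have hLx : HasFDerivAt (fun η => S R x η) Lx ξ := (hSd x).hasFDerivAt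
  have hLy : HasFDerivAt (fun η => S R y η) Ly ξ := (hSd y).hasFDerivAt
  have hns : HasFDerivAt (fun η : Rd d => ‖η‖ ^ 2) (2 • innerSL ℝ ξ) ξ :=
    (hasStrictFDerivAt_norm_sq ξ).hasFDerivAt
  have hφ : HasFDerivAt (fun η : Rd d => τ * ‖η‖ ^ 2 + S R y η - S R x η)
      (τ • (2 • innerSL ℝ ξ) + Ly - Lx) ξ := ((hns.const_mul τ).add hLy).sub hLx
  rw [hφ.fderiv]
  set N : ℝ := ‖τ • (2 • innerSL ℝ ξ) + Ly - Lx‖ with hNdef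
  set K : ℝ := C' * (1 + ‖x‖) * R ^ (-(ρ/3)) + C' * (1 + ‖y‖) * R ^ (-(ρ/3)) with hKdef
  clear_value N K
  -- error estimates for the derivatives
  have hinner : ∀ z : Rd d, HasFDerivAt (fun η : Rd d => ⟪z, η⟫_ℝ) (innerSL ℝ z) ξ :=
    fun z => (innerSL ℝ z).hasFDerivAt
  have hGx : HasFDerivAt (fun η : Rd d => S R x η - ⟪x, η⟫_ℝ) (Lx - innerSL ℝ x) ξ :=
    hLx.sub (hinner x)
  have hGy : HasFDerivAt (fun η : Rd d => S R y η - ⟪y, η⟫_ℝ) (Ly - innerSL ℝ y) ξ :=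
    hLy.sub (hinner y)
  have hEx : ∀ u : Rd d, ‖u‖ ≤ 1 →
      |Lx u - ⟪x, u⟫_ℝ| ≤ C' * (1 + ‖x‖) * R ^ (-(ρ/3)) := by
    intro u hu
    have hb2 := (iteratedFDeriv ℝ 1 (fun ξ' => S R x ξ' - ⟪x, ξ'⟫_ℝ) ξ).le_opNorm
      (fun _ => u)
    simp only [Finset.prod_const, Finset.card_univ, Fintype.card_fin, pow_one] at hb2
    have e1 : Lx u - ⟪x, u⟫_ℝ
        = iteratedFDeriv ℝ 1 (fun ξ' => S R x ξ' - ⟪x, ξ'⟫_ℝ) ξ (fun _ => u) := by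
      rw [iteratedFDeriv_one_apply, hGx.fderiv]
      simp
    rw [e1, ← Real.norm_eq_abs]
    calc ‖iteratedFDeriv ℝ 1 (fun ξ' => S R x ξ' - ⟪x, ξ'⟫_ℝ) ξ (fun _ => u)‖
        ≤ ‖iteratedFDeriv ℝ 1 (fun ξ' => S R x ξ' - ⟪x, ξ'⟫_ℝ) ξ‖ * ‖u‖ := hb2
      _ ≤ (C' * (1 + ‖x‖) * R ^ (-(ρ/3))) * 1 :=
          mul_le_mul hIx hu (norm_nonneg u) (by positivity)
      _ = _ := mul_one _
  have hEy : ∀ u : Rd d, ‖u‖ ≤ 1 →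
      |Ly u - ⟪y, u⟫_ℝ| ≤ C' * (1 + ‖y‖) * R ^ (-(ρ/3)) := by
    intro u hu
    have hb2 := (iteratedFDeriv ℝ 1 (fun ξ' => S R y ξ' - ⟪y, ξ'⟫_ℝ) ξ).le_opNorm
      (fun _ => u)
    simp only [Finset.prod_const, Finset.card_univ, Fintype.card_fin, pow_one] at hb2
    have e1 : Ly u - ⟪y, u⟫_ℝ
        = iteratedFDeriv ℝ 1 (fun ξ' => S R y ξ' - ⟪y, ξ'⟫_ℝ) ξ (fun _ => u) := by
      rw [iteratedFDeriv_one_apply, hGy.fderiv]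
      simp
    rw [e1, ← Real.norm_eq_abs]
    calc ‖iteratedFDeriv ℝ 1 (fun ξ' => S R y ξ' - ⟪y, ξ'⟫_ℝ) ξ (fun _ => u)‖
        ≤ ‖iteratedFDeriv ℝ 1 (fun ξ' => S R y ξ' - ⟪y, ξ'⟫_ℝ) ξ‖ * ‖u‖ := hb2
      _ ≤ (C' * (1 + ‖y‖) * R ^ (-(ρ/3))) * 1 :=
          mul_le_mul hIy hu (norm_nonneg u) (by positivity)
      _ = _ := mul_one _
  -- the key estimate on the derivative evaluated at unit vectors
  have hkey : ∀ u : Rd d, ‖u‖ ≤ 1 →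
      2*τ*⟪ξ, u⟫_ℝ + ⟪y, u⟫_ℝ - ⟪x, u⟫_ℝ - K ≤ N := by
    intro u hu
    rw [hNdef, hKdef]
    have happ : (τ • (2 • innerSL ℝ ξ) + Ly - Lx) u
        = 2*τ*⟪ξ, u⟫_ℝ + (Ly u - ⟪y, u⟫_ℝ) - (Lx u - ⟪x, u⟫_ℝ) + ⟪y, u⟫_ℝ - ⟪x, u⟫_ℝ := by
      simp only [ContinuousLinearMap.sub_apply, ContinuousLinearMap.add_apply,
        ContinuousLinearMap.smul_apply, innerSL_apply_apply, smul_eq_mul]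
      ring
    have h1 : (τ • (2 • innerSL ℝ ξ) + Ly - Lx) u
        ≤ ‖τ • (2 • innerSL ℝ ξ) + Ly - Lx‖ := by
      have h2 := (τ • (2 • innerSL ℝ ξ) + Ly - Lx).le_opNorm u
      have h3 : ‖(τ • (2 • innerSL ℝ ξ) + Ly - Lx) u‖
          ≤ ‖τ • (2 • innerSL ℝ ξ) + Ly - Lx‖ :=
        le_trans h2 (mul_le_of_le_one_right (norm_nonneg _) hu)
      exact le_trans (le_abs_self _) (by rwa [Real.norm_eq_abs] at h3)
    rw [happ] at h1
    have h6 := neg_abs_le (Ly u - ⟪y, u⟫_ℝ)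
    have h7 := le_abs_self (Lx u - ⟪x, u⟫_ℝ)
    have h4 := hEx u hu
    have h5 := hEy u hu
    linarith
  -- evaluation at the three unit vectors
  have hu₁ : ‖(‖ξ‖⁻¹ • ξ : Rd d)‖ ≤ 1 := by
    rw [norm_smul, Real.norm_eq_abs, abs_inv, abs_norm, inv_mul_cancel₀ hnξpos.ne']
  have k1 := hkey (‖ξ‖⁻¹ • ξ) hu₁
  rw [real_inner_smul_right, real_inner_smul_right, real_inner_smul_right,
    real_inner_self_eq_norm_sq] at k1
  have e1 : ‖ξ‖⁻¹ * ‖ξ‖ ^ 2 = ‖ξ‖ := by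
    rw [sq]; field_simp
  rw [e1] at k1
  -- k1 : 2*τ*‖ξ‖ + ‖ξ‖⁻¹ * ⟪y,ξ⟫ - ‖ξ‖⁻¹ * ⟪x,ξ⟫ - K ≤ N
  have hu₃ : ‖(‖y‖⁻¹ • y : Rd d)‖ ≤ 1 := by
    rw [norm_smul, Real.norm_eq_abs, abs_inv, abs_norm, inv_mul_cancel₀ hbpos.ne']
  have k3 := hkey (‖y‖⁻¹ • y) hu₃
  rw [real_inner_smul_right, real_inner_smul_right, real_inner_smul_right,
    real_inner_self_eq_norm_sq, real_inner_comm y ξ] at k3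
  have e3 : ‖y‖⁻¹ * ‖y‖ ^ 2 = ‖y‖ := by
    rw [sq]; field_simp
  rw [e3] at k3
  -- k3 : 2*τ*(‖y‖⁻¹ * ⟪y,ξ⟫) + ‖y‖ - ‖y‖⁻¹ * ⟪x,y⟫ - K ≤ N
  have hbB : -σ₁ * ‖ξ‖ ≤ ‖y‖⁻¹ * ⟪y, ξ⟫_ℝ := by
    have h := mul_le_mul_of_nonneg_left hyξ (inv_nonneg.mpr hbpos.le)
    have e : ‖y‖⁻¹ * (-σ₁ * (‖y‖ * ‖ξ‖)) = -σ₁ * ‖ξ‖ := by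
      field_simp; try ring
    rw [e] at h; exact h
  have hbC : ‖y‖⁻¹ * ⟪x, y⟫_ℝ ≤ ‖x‖ := by
    have h := mul_le_mul_of_nonneg_left hCSxy (inv_nonneg.mpr hbpos.le)
    have e : ‖y‖⁻¹ * (‖x‖ * ‖y‖) = ‖x‖ := by field_simp; try ring
    rw [e] at h; exact h
  have h3 : -2*τ*σ₁*‖ξ‖ + ‖y‖ - ‖x‖ - K ≤ N := by
    have hm3 : 2*τ*(-σ₁*‖ξ‖) ≤ 2*τ*(‖y‖⁻¹ * ⟪y, ξ⟫_ℝ) :=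
      mul_le_mul_of_nonneg_left hbB (by positivity)
    linarith
  have hξB : -σ₁ * ‖y‖ ≤ ‖ξ‖⁻¹ * ⟪y, ξ⟫_ℝ := by
    have h := mul_le_mul_of_nonneg_left hyξ (inv_nonneg.mpr hnξpos.le)
    have e : ‖ξ‖⁻¹ * (-σ₁ * (‖y‖ * ‖ξ‖)) = -σ₁ * ‖y‖ := by field_simp; try ring
    rw [e] at h; exact h
  -- main case distinction
  have hfin : c₂ * (τ + ‖x‖ + ‖y‖) - K ≤ N := by
    rcases le_or_gt ‖x‖ (R ^ ((5:ℝ)/12)) with hcase | hcase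
    · -- case 1 : x is comparatively close
      have ha_small : ‖x‖ ≤ ‖y‖ * ((1 - σ₁)/16) := by
        have e : R ^ ((5:ℝ)/12) = R ^ ((1:ℝ)/2) * R ^ (-((1:ℝ)/12)) := by
          rw [← Real.rpow_add hRpos]; norm_num
        calc ‖x‖ ≤ R ^ ((5:ℝ)/12) := hcase
          _ = R ^ ((1:ℝ)/2) * R ^ (-((1:ℝ)/12)) := e
          _ ≤ ‖y‖ * ((1 - σ₁)/16) :=
              mul_le_mul hyb.le hcond2.le (Real.rpow_nonneg hRpos.le _) hbpos.le
      have hξA : ‖ξ‖⁻¹ * ⟪x, ξ⟫_ℝ ≤ ‖x‖ := by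
        have h := mul_le_mul_of_nonneg_left hCSxξ (inv_nonneg.mpr hnξpos.le)
        have e : ‖ξ‖⁻¹ * (‖x‖ * ‖ξ‖) = ‖x‖ := by field_simp; try ring
        rw [e] at h; exact h
      have h1' : 2*τ*‖ξ‖ - σ₁*‖y‖ - ‖x‖ - K ≤ N := by linarith
      exact case1_comb h1' h3 ha_small hτ (norm_nonneg ξ) hmξ hm1 hm0.le hμ0.le hμ2
        hc₂def (by linarith) (by linarith) hapos.le hbpos.le
    · -- case 2 : x is outgoing-excluded, so cos ≤ -σt₁
      have hcos2 : ⟪x, ξ⟫_ℝ / (‖x‖ * ‖ξ‖) ≤ -σt₁ := by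
        by_contra h
        push_neg at h
        exact hxnz ⟨hcase, Set.mem_Ioo.mpr hyJ, by rwa [one_mul]⟩
      have hxξ : ⟪x, ξ⟫_ℝ ≤ -σt₁ * (‖x‖ * ‖ξ‖) := by
        have h := (div_le_iff₀ (by positivity : (0:ℝ) < ‖x‖ * ‖ξ‖)).1 hcos2
        linarith
      have hξA : ‖ξ‖⁻¹ * ⟪x, ξ⟫_ℝ ≤ -σt₁ * ‖x‖ := by
        have h := mul_le_mul_of_nonneg_left hxξ (inv_nonneg.mpr hnξpos.le)
        have e : ‖ξ‖⁻¹ * (-σt₁ * (‖x‖ * ‖ξ‖)) = -σt₁ * ‖x‖ := by field_simp; try ring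
        rw [e] at h; exact h
      have h1 : 2*τ*‖ξ‖ + σt₁*‖x‖ - σ₁*‖y‖ - K ≤ N := by linarith
      -- second unit vector -x/‖x‖
      have hu₂ : ‖((-‖x‖⁻¹) • x : Rd d)‖ ≤ 1 := by
        rw [norm_smul, Real.norm_eq_abs, abs_neg, abs_inv, abs_norm,
          inv_mul_cancel₀ hapos.ne']
      have k2 := hkey ((-‖x‖⁻¹) • x) hu₂
      rw [real_inner_smul_right, real_inner_smul_right, real_inner_smul_right,
        real_inner_self_eq_norm_sq, real_inner_comm x ξ, real_inner_comm x y] at k2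
      have e2 : (-‖x‖⁻¹) * ‖x‖ ^ 2 = -‖x‖ := by rw [sq]; field_simp
      rw [e2] at k2
      -- k2 : 2*τ*((-‖x‖⁻¹) * ⟪x,ξ⟫) + (-‖x‖⁻¹) * ⟪x,y⟫ - (-‖x‖) - K ≤ N
      have haA : σt₁ * ‖ξ‖ ≤ (-‖x‖⁻¹) * ⟪x, ξ⟫_ℝ := by
        have h := mul_le_mul_of_nonneg_left hxξ (inv_nonneg.mpr hapos.le)
        have e : ‖x‖⁻¹ * (-σt₁ * (‖x‖ * ‖ξ‖)) = -σt₁ * ‖ξ‖ := by field_simp; try ring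
        rw [e] at h
        linarith
      have haC : -‖y‖ ≤ (-‖x‖⁻¹) * ⟪x, y⟫_ℝ := by
        have h := mul_le_mul_of_nonneg_left hCSxy (inv_nonneg.mpr hapos.le)
        have e : ‖x‖⁻¹ * (‖x‖ * ‖y‖) = ‖y‖ := by field_simp; try ring
        rw [e] at h
        linarith
      have h2 : 2*τ*σt₁*‖ξ‖ + ‖x‖ - ‖y‖ - K ≤ N := by
        have hm2 : 2*τ*(σt₁*‖ξ‖) ≤ 2*τ*((-‖x‖⁻¹) * ⟪x, ξ⟫_ℝ) :=
          mul_le_mul_of_nonneg_left haA (by positivity)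
        linarith
      exact case2_comb h1 h2 h3 hτ (norm_nonneg ξ) hmξ hm1 hm0.le hμ0.le hμ1
        hc₂def (by linarith) hσt₁ (by linarith) hapos.le hbpos.le
  -- conclusion
  have hKb : K ≤ c₂/2 * (τ + ‖x‖ + ‖y‖) := by
    rw [hKdef]
    exact K_comb hC'0 hRρ0 hcond1.le hxg1 hbpos.le hτ
  exact final_comb hfin hKb hc₂ hxg1 hbpos.le hτ
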